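/- With a(t,b) and c(t,b) as in the simple tangency condition (a(t,b) = (-b(t^3+2t^2-1)+t^5-5t^3-5t^2-3)/(2t^2(t-1)(t^2+t-1)), c(t,b) = -(b t^2(t^3-2t+1)+3t^5+5t^3-5t^2+1)/(2(t+1)(t^2+t-1))), for any t1, t2 not in {0, ±1, roots of t^2+t-1} and any b, one has the identity (a(t1,b) - a(t2,b))·t1^2 t2^2 (t1-1)(t2-1) + (c(t1,b) - c(t2,b))·(t1+1)(t2+1) = 3(t1 - t2)^3 (t1^2 + 3 t1 t2 + t2^2) / ((t1^2 + t1 - 1)(t2^2 + t2 - 1)). In particular, this expression is independent of b. -/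

import Mathlib

/-- Coefficient `a(t,b)` of a section simply tangent to the curve at parameter `t`. -/
noncomputable def tanA (t b : ℝ) : ℝ :=
  (-b * (t ^ 3 + 2 * t ^ 2 - 1) + t ^ 5 - 5 * t ^ 3 - 5 * t ^ 2 - 3) /
    (2 * t ^ 2 * (t - 1) * (t ^ 2 + t - 1))

/-- Coefficient `c(t,b)` of a section simply tangent to the curve at parameter `t`. -/
noncomputable def tanC (t b : ℝ) : ℝ :=
  -(b * t ^ 2 * (t ^ 3 - 2 * t + 1) + 3 * t ^ 5 + 5 * t ^ 3 - 5 * t ^ 2 + 1) /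
    (2 * (t + 1) * (t ^ 2 + t - 1))

theorem stmt11 (t₁ t₂ b : ℝ)
    (h10 : t₁ ≠ 0) (h11 : t₁ ≠ 1) (h12 : t₁ ≠ -1) (h13 : t₁ ^ 2 + t₁ - 1 ≠ 0)
    (h20 : t₂ ≠ 0) (h21 : t₂ ≠ 1) (h22 : t₂ ≠ -1) (h23 : t₂ ^ 2 + t₂ - 1 ≠ 0) :
    (tanA t₁ b - tanA t₂ b) * t₁ ^ 2 * t₂ ^ 2 * (t₁ - 1) * (t₂ - 1) +
      (tanC t₁ b - tanC t₂ b) * (t₁ + 1) * (t₂ + 1) =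
    3 * (t₁ - t₂) ^ 3 * (t₁ ^ 2 + 3 * t₁ * t₂ + t₂ ^ 2) /
      ((t₁ ^ 2 + t₁ - 1) * (t₂ ^ 2 + t₂ - 1)) := by
  have e11 : t₁ - 1 ≠ 0 := sub_ne_zero.mpr h11
  have e12 : t₁ + 1 ≠ 0 := by intro h; apply h12; linarith
  have e21 : t₂ - 1 ≠ 0 := sub_ne_zero.mpr h21
  have e22 : t₂ + 1 ≠ 0 := by intro h; apply h22; linarith
  have f13 : t₁ * (t₁ + 1) - 1 ≠ 0 := by convert h13 using 1; ring
  have f23 : t₂ * (t₂ + 1) - 1 ≠ 0 := by convert h23 using 1; ring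
  unfold tanA tanC
  field_simp
  ring
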